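/- There exist a constant C > 0 and N ∈ ℕ such that for all even integers n ≥ N, | 4n · min{ MSE(n, m) : m ∈ ℕ, m | n, 1 ≤ m, 2m ≤ n } − (1 + 2/π) | ≤ C/n. That is, the ratio of the best k-fold cross-validation mean-squared error for Majority under uniformly random labels to the mean-squared error 1/(4n) of an independent validation set of size n equals 1 + 2/π + O(1/n). -/

import Mathlib

open Real

/-- Binomial coefficient with an integer lower index, with the convention that it
vanishes for negative lower index (and, via `Nat.choose`, above the upper index). -/
def ibinom (a : ℕ) (b : ℤ) : ℕ := if 0 ≤ b then a.choose b.toNat else 0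

/-- The fold covariance of k-fold cross-validation of the Majority algorithm on `n`
i.i.d. uniformly random binary labels with fold size `m = n/k`:
`Cov(n, m) = 2^{-n} · Σ_{j=0}^{m-1} binom(m-1, j)² · binom(n-2m, ⌊(n-m)/2⌋ - j)`. -/
noncomputable def Cov (n m : ℕ) : ℝ :=
  (2 : ℝ)⁻¹ ^ n * ∑ j ∈ Finset.range m,
    ((m - 1).choose j : ℝ) ^ 2 * (ibinom (n - 2 * m) (((n : ℤ) - m) / 2 - j) : ℝ)

/-- The mean-squared error of the k-fold cross-validation risk estimator of Majority
under uniformly random labels, with fold size `m = n/k`: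
`MSE(n, m) = (1 - m/n)·Cov(n, m) + 1/(4n)`. -/
noncomputable def MSE (n m : ℕ) : ℝ :=
  (1 - (m : ℝ) / n) * Cov n m + 1 / (4 * n)

namespace CVaux

open Real Finset Filter Topology
open scoped Nat



noncomputable def ub (r : ℕ) : ℝ := (Nat.centralBinom r : ℝ)^2 * (4*r+1) / 16^r
noncomputable def vb (r : ℕ) : ℝ := (Nat.centralBinom r : ℝ)^2 * (4*r+2) / 16^r

lemma cb_succ (r : ℕ) :
    ((r:ℝ)+1) * (Nat.centralBinom (r+1) : ℝ) = (2*(2*(r:ℝ)+1)) * (Nat.centralBinom r : ℝ) := by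
  have h' := congrArg (Nat.cast : ℕ → ℝ) (Nat.succ_mul_centralBinom_succ r)
  push_cast at h'
  linarith

lemma cb_pos (r : ℕ) : (0:ℝ) < (Nat.centralBinom r : ℝ) := by
  exact_mod_cast Nat.centralBinom_pos r

lemma cb_sq (r : ℕ) :
    (Nat.centralBinom (r+1) : ℝ)^2 * ((r:ℝ)+1)^2
      = 4*(2*(r:ℝ)+1)^2 * (Nat.centralBinom r : ℝ)^2 := by
  have h := cb_succ r
  linear_combination (((r:ℝ)+1) * (Nat.centralBinom (r+1) : ℝ)
    + (2*(2*(r:ℝ)+1)) * (Nat.centralBinom r : ℝ)) * h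

lemma ub_mono : Monotone ub := by
  apply monotone_nat_of_le_succ
  intro r
  set c := (Nat.centralBinom r : ℝ) with hc
  set d := (Nat.centralBinom (r+1) : ℝ) with hd
  have hd2 := cb_sq r
  unfold ub
  rw [div_le_div_iff₀ (by positivity) (by positivity)]
  push_cast
  have hkey : c^2*(4*(r:ℝ)+1)*16*((r:ℝ)+1)^2 ≤ d^2*(4*((r:ℝ)+1)+1)*((r:ℝ)+1)^2 := by
    have h3 : d^2*(4*((r:ℝ)+1)+1)*((r:ℝ)+1)^2 = 4*(2*(r:ℝ)+1)^2*c^2*(4*(r:ℝ)+5) := by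
      linear_combination (4*(r:ℝ)+5) * hd2
    rw [h3]
    nlinarith [sq_nonneg c]
  have hkey' : c^2*(4*(r:ℝ)+1)*16 ≤ d^2*(4*((r:ℝ)+1)+1) :=
    le_of_mul_le_mul_right hkey (by positivity)
  have h16 : (0:ℝ) ≤ 16^r := by positivity
  calc c^2*(4*(r:ℝ)+1)*16^(r+1) = (c^2*(4*(r:ℝ)+1)*16)*16^r := by ring
    _ ≤ (d^2*(4*((r:ℝ)+1)+1))*16^r := mul_le_mul_of_nonneg_right hkey' h16
    _ = d^2*(4*((r:ℝ)+1)+1)*16^r := by ring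

lemma vb_anti : Antitone vb := by
  apply antitone_nat_of_succ_le
  intro r
  set c := (Nat.centralBinom r : ℝ) with hc
  set d := (Nat.centralBinom (r+1) : ℝ) with hd
  have hd2 := cb_sq r
  unfold vb
  rw [div_le_div_iff₀ (by positivity) (by positivity)]
  push_cast
  have hkey : d^2*(4*((r:ℝ)+1)+2)*((r:ℝ)+1)^2 ≤ c^2*(4*(r:ℝ)+2)*16*((r:ℝ)+1)^2 := by
    have h3 : d^2*(4*((r:ℝ)+1)+2)*((r:ℝ)+1)^2 = 4*(2*(r:ℝ)+1)^2*c^2*(4*(r:ℝ)+6) := by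
      linear_combination (4*(r:ℝ)+6) * hd2
    rw [h3]
    nlinarith [sq_nonneg c, mul_nonneg (sq_nonneg c) (Nat.cast_nonneg r : (0:ℝ) ≤ r)]
  have hkey' : d^2*(4*((r:ℝ)+1)+2) ≤ c^2*(4*(r:ℝ)+2)*16 :=
    le_of_mul_le_mul_right hkey (by positivity)
  have h16 : (0:ℝ) ≤ 16^r := by positivity
  calc d^2*(4*((r:ℝ)+1)+2)*16^r ≤ (c^2*(4*(r:ℝ)+2)*16)*16^r :=
        mul_le_mul_of_nonneg_right hkey' h16
    _ = c^2*(4*(r:ℝ)+2)*16^(r+1) := by ring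

lemma W_eq_cb (r : ℕ) :
    Real.Wallis.W r = 16^r / ((Nat.centralBinom r : ℝ)^2 * (2*r+1)) := by
  rw [Real.Wallis.W_eq_factorial_ratio]
  have hfact : ((Nat.factorial (2*r) : ℕ) : ℝ)
      = (Nat.centralBinom r : ℝ) * (Nat.factorial r : ℝ) * (Nat.factorial r : ℝ) := by
    have h := Nat.choose_mul_factorial_mul_factorial (show r ≤ 2*r by omega)
    have h2 : 2*r - r = r := by omega
    rw [h2] at h
    have h' := congrArg (Nat.cast : ℕ → ℝ) h
    push_cast at h'
    rw [← h']
    rfl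
  have hr : ((Nat.factorial r : ℕ) : ℝ) ≠ 0 := by exact_mod_cast (Nat.factorial_pos r).ne'
  have hc := (cb_pos r).ne'
  have h16 : (2:ℝ)^(4*r) = 16^r := by
    rw [show (16:ℝ) = 2^4 from by norm_num, ← pow_mul, mul_comm]
  rw [hfact, h16]
  have h2r1 : (0:ℝ) < 2*(r:ℝ) + 1 := by positivity
  field_simp

lemma vb_tendsto : Tendsto vb atTop (𝓝 (4/π)) := by
  have hW : ∀ r, vb r = 2 / Real.Wallis.W r := by
    intro r
    rw [W_eq_cb, vb]
    have hc := cb_pos r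
    have h16 : (0:ℝ) < 16^r := by positivity
    rw [div_div_eq_mul_div]
    field_simp
    ring
  have h := Real.Wallis.tendsto_W_nhds_pi_div_two
  have h2 : Tendsto (fun r => 2 / Real.Wallis.W r) atTop (𝓝 (2 / (π/2))) :=
    Filter.Tendsto.div tendsto_const_nhds h (by positivity)
  have he : (2:ℝ) / (π/2) = 4/π := by
    rw [div_div_eq_mul_div]
    norm_num
  rw [he] at h2
  simpa only [← hW] using h2

lemma vb_ge (r : ℕ) : 4/π ≤ vb r := vb_anti.le_of_tendsto vb_tendsto r

lemma ub_le_vb (r : ℕ) : ub r ≤ vb r := by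
  unfold ub vb
  gcongr
  norm_num

lemma ub_le (r : ℕ) : ub r ≤ 4/π := by
  refine ge_of_tendsto vb_tendsto ?_
  filter_upwards [eventually_ge_atTop r] with q hq
  exact (ub_mono hq).trans (ub_le_vb q)

lemma cb_upper (r : ℕ) : (Nat.centralBinom r:ℝ)^2 * (4*r+1) * π ≤ 16^r * 4 := by
  have h := ub_le r
  unfold ub at h
  have h16 : (0:ℝ) < 16^r := by positivity
  have := (div_le_div_iff₀ h16 pi_pos).1 h
  linarith

lemma cb_lower (r : ℕ) : 16^r * 4 ≤ (Nat.centralBinom r:ℝ)^2 * (4*r+2) * π := by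
  have h := vb_ge r
  unfold vb at h
  have h16 : (0:ℝ) < 16^r := by positivity
  have := (div_le_div_iff₀ pi_pos h16).1 h
  linarith



lemma two_mul_choose (p : ℕ) :
    2 * (2*p+1).choose (p+1) = Nat.centralBinom (p+1) := by
  have h1 : Nat.centralBinom (p+1) = (2*p+1).choose p + (2*p+1).choose (p+1) := by
    rw [Nat.centralBinom, show 2*(p+1) = (2*p+1)+1 from by ring]
    exact Nat.choose_succ_succ (2*p+1) p
  have h2 : (2*p+1).choose p = (2*p+1).choose (p+1) := by
    have := Nat.choose_symm (show p+1 ≤ 2*p+1 by omega)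
    rw [show 2*p+1-(p+1) = p from by omega] at this
    exact this
  omega

lemma choose_sq_lower (s : ℕ) (hs : 1 ≤ s) :
    (4:ℝ)^s ≤ ((s-1).choose (s/2) : ℝ)^2 * (2*π*((s:ℝ)+1)) := by
  rcases Nat.even_or_odd s with ⟨r, hr⟩ | ⟨r, hr⟩
  · -- s = r + r, r ≥ 1
    obtain ⟨p, rfl⟩ : ∃ p, r = p + 1 := ⟨r - 1, by omega⟩
    subst hr
    have h1 : ((p+1)+(p+1)) - 1 = 2*p+1 := by omega
    have h2 : ((p+1)+(p+1))/2 = p+1 := by omega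
    rw [h1, h2]
    have hc := two_mul_choose p
    have hc' : (Nat.centralBinom (p+1) : ℝ) = 2 * ((2*p+1).choose (p+1) : ℝ) := by
      exact_mod_cast hc.symm
    have hl := cb_lower (p+1)
    rw [hc'] at hl
    have h4 : (4:ℝ)^((p+1)+(p+1)) = 16^(p+1) := by
      rw [show (16:ℝ) = 4^2 from by norm_num, ← pow_mul]
      congr 1
      ring
    rw [h4]
    push_cast at hl ⊢
    nlinarith [hl]
  · -- s = 2r+1
    subst hr
    have h1 : (2*r+1) - 1 = 2*r := by omega
    have h2 : (2*r+1)/2 = r := by omega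
    rw [h1, h2]
    have hl := cb_lower r
    have h4 : (4:ℝ)^(2*r+1) = 4 * 16^r := by
      rw [pow_succ, show (16:ℝ) = 4^2 from by norm_num, ← pow_mul]
      ring
    rw [h4]
    have hcb : ((2*r).choose r : ℝ) = (Nat.centralBinom r : ℝ) := rfl
    rw [hcb]
    push_cast at hl ⊢
    nlinarith [hl, sq_nonneg ((Nat.centralBinom r : ℝ)), pi_pos,
      mul_nonneg (sq_nonneg ((Nat.centralBinom r : ℝ))) pi_pos.le]

lemma choose_sq_upper (s : ℕ) (hs : 2 ≤ s) :
    ((s-1).choose (s/2) : ℝ)^2 * (2*π*((s:ℝ)-1)) ≤ (4:ℝ)^s := by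
  rcases Nat.even_or_odd s with ⟨r, hr⟩ | ⟨r, hr⟩
  · obtain ⟨p, rfl⟩ : ∃ p, r = p + 1 := ⟨r - 1, by omega⟩
    subst hr
    have h1 : ((p+1)+(p+1)) - 1 = 2*p+1 := by omega
    have h2 : ((p+1)+(p+1))/2 = p+1 := by omega
    rw [h1, h2]
    have hc : (Nat.centralBinom (p+1) : ℝ) = 2 * ((2*p+1).choose (p+1) : ℝ) := by
      exact_mod_cast (two_mul_choose p).symm
    have hu := cb_upper (p+1)
    rw [hc] at hu
    have h4 : (4:ℝ)^((p+1)+(p+1)) = 16^(p+1) := by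
      rw [show (16:ℝ) = 4^2 from by norm_num, ← pow_mul]
      congr 1
      ring
    rw [h4]
    push_cast at hu ⊢
    nlinarith [hu, sq_nonneg (((2*p+1).choose (p+1) : ℝ)), pi_pos,
      mul_nonneg (sq_nonneg (((2*p+1).choose (p+1) : ℝ))) pi_pos.le]
  · obtain ⟨q, rfl⟩ : ∃ q, r = q + 1 := ⟨r - 1, by omega⟩
    subst hr
    have h1 : (2*(q+1)+1) - 1 = 2*(q+1) := by omega
    have h2 : (2*(q+1)+1)/2 = q+1 := by omega
    rw [h1, h2]
    have hu := cb_upper (q+1)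
    have h4 : (4:ℝ)^(2*(q+1)+1) = 4 * 16^(q+1) := by
      rw [pow_succ, show (16:ℝ) = 4^2 from by norm_num, ← pow_mul]
      ring
    rw [h4]
    have hcb : ((2*(q+1)).choose (q+1) : ℝ) = (Nat.centralBinom (q+1) : ℝ) := rfl
    rw [hcb]
    push_cast at hu ⊢
    nlinarith [hu, sq_nonneg ((Nat.centralBinom (q+1) : ℝ)), pi_pos,
      mul_nonneg (sq_nonneg ((Nat.centralBinom (q+1) : ℝ))) pi_pos.le]


lemma sum_choose_le (b : ℕ) (T : Finset ℕ) : ∑ k ∈ T, b.choose k ≤ 2^b := by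
  classical
  have h1 : ∑ k ∈ T, b.choose k = ∑ k ∈ T.filter (fun k => k ≤ b), b.choose k := by
    refine (Finset.sum_subset (Finset.filter_subset _ _) ?_).symm
    intro k hk hk'
    have : b < k := by
      by_contra hbk
      exact hk' (Finset.mem_filter.2 ⟨hk, by omega⟩)
    exact Nat.choose_eq_zero_of_lt this
  rw [h1, ← Nat.sum_range_choose b]
  apply Finset.sum_le_sum_of_subset
  intro k hk
  have := (Finset.mem_filter.1 hk).2
  exact Finset.mem_range.2 (by omega)

lemma sum_ibinom_le (b m : ℕ) (t : ℤ) :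
    ∑ j ∈ Finset.range m, ibinom b (t - j) ≤ 2^b := by
  classical
  set F := (Finset.range m).filter (fun j : ℕ => (0:ℤ) ≤ t - (j:ℤ)) with hF
  have h1 : ∑ j ∈ Finset.range m, ibinom b (t - j) = ∑ j ∈ F, ibinom b (t - j) := by
    refine (Finset.sum_subset (Finset.filter_subset _ _) ?_).symm
    intro j hj hj'
    have : ¬ (0:ℤ) ≤ t - j := by
      by_contra hc
      exact hj' (Finset.mem_filter.2 ⟨hj, hc⟩)
    simp only [ibinom, if_neg this]
  have h2 : ∑ j ∈ F, ibinom b (t - j) = ∑ k ∈ F.image (fun j : ℕ => (t - (j:ℤ)).toNat), b.choose k := by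
    rw [Finset.sum_image ?_]
    · refine Finset.sum_congr rfl ?_
      intro j hj
      have hj' := (Finset.mem_filter.1 hj).2
      simp only [ibinom, if_pos hj']
    · intro i hi j hj hij
      have hi' := (Finset.mem_filter.1 hi).2
      have hj' := (Finset.mem_filter.1 hj).2
      simp only at hij
      omega
  rw [h1, h2]
  exact sum_choose_le b _

lemma vander (a b m : ℕ) (t : ℤ) (ht : 0 ≤ t) (ham : a < m) :
    ∑ j ∈ Finset.range m, a.choose j * ibinom b (t - j) = (a+b).choose t.toNat := by
  set T := t.toNat with hT
  have htT : t = (T:ℤ) := (Int.toNat_of_nonneg ht).symm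
  set M := max m (T+1) with hM
  have h1 : ∑ j ∈ Finset.range m, a.choose j * ibinom b (t - j)
      = ∑ j ∈ Finset.range M, a.choose j * ibinom b (t - j) := by
    apply Finset.sum_subset (Finset.range_subset_range.2 (le_max_left _ _))
    intro j hj hj'
    have haj : a < j := by
      simp only [Finset.mem_range] at hj hj'
      omega
    simp [Nat.choose_eq_zero_of_lt haj]
  have h2 : ∑ j ∈ Finset.range M, a.choose j * ibinom b (t - j)
      = ∑ j ∈ Finset.range (T+1), a.choose j * ibinom b (t - j) := by
    refine (Finset.sum_subset (Finset.range_subset_range.2 (le_max_right _ _)) ?_).symm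
    intro j hj hj'
    have hTj : T < j := by
      simp only [Finset.mem_range] at hj'
      omega
    have hneg : ¬ (0:ℤ) ≤ t - j := by omega
    simp only [ibinom, if_neg hneg, mul_zero]
  have h3 : ∀ j ∈ Finset.range (T+1), a.choose j * ibinom b (t - j)
      = a.choose j * b.choose (T - j) := by
    intro j hj
    have hjT : j ≤ T := by
      simp only [Finset.mem_range] at hj
      omega
    have h0 : (0:ℤ) ≤ t - j := by omega
    have htn : (t - (j:ℤ)).toNat = T - j := by omega
    simp only [ibinom, if_pos h0, htn]
  rw [h1, h2, Finset.sum_congr rfl h3, Nat.add_choose_eq,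
    Finset.Nat.sum_antidiagonal_eq_sum_range_succ_mk]


lemma cov_lower (n m : ℕ) (hm : 1 ≤ m) (h2 : 2*m ≤ n) :
    1/(2*π*(((n-m : ℕ)):ℝ)+2*π) ≤ Cov n m := by
  have hmn : m ≤ n := by omega
  set s := n - m with hs
  set a := m - 1 with ha
  set b := n - 2*m with hb
  set t : ℤ := ((n:ℤ) - m)/2 with htdef
  have ht0 : 0 ≤ t := by
    rw [htdef]
    omega
  have hT : t.toNat = s/2 := by omega
  have hab : a + b = s - 1 := by omega
  have hs1 : 1 ≤ s := by omega
  -- Vandermonde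
  have hvn := vander a b m t ht0 (by omega)
  have hv : ∑ j ∈ Finset.range m, (a.choose j : ℝ) * (ibinom b (t - j) : ℝ)
      = ((a+b).choose t.toNat : ℝ) := by
    exact_mod_cast congrArg (Nat.cast : ℕ → ℝ) hvn
  set S := ∑ j ∈ Finset.range m, ((a.choose j : ℝ))^2 * (ibinom b (t - j) : ℝ) with hSdef
  have hS0 : 0 ≤ S := by
    apply Finset.sum_nonneg
    intro j _
    positivity
  have hCS : (((a+b).choose t.toNat : ℝ))^2 ≤ S * ∑ j ∈ Finset.range m, (ibinom b (t - j) : ℝ) := by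
    rw [← hv]
    exact Finset.sum_sq_le_sum_mul_sum_of_sq_eq_mul _ (fun i _ => by positivity)
      (fun i _ => by positivity) (fun i _ => by ring)
  have hsum2 : (∑ j ∈ Finset.range m, (ibinom b (t - j) : ℝ)) ≤ 2^b := by
    exact_mod_cast sum_ibinom_le b m t
  have hCS' : (((a+b).choose t.toNat : ℝ))^2 ≤ S * 2^b :=
    hCS.trans (mul_le_mul_of_nonneg_left hsum2 hS0)
  -- choose lower bound
  have hch := choose_sq_lower s hs1
  have hcongr : (s-1).choose (s/2) = (a+b).choose t.toNat := by rw [hab, hT]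
  rw [hcongr] at hch
  -- combine
  have hpi : (0:ℝ) < 2*π*((s:ℝ)+1) := by positivity
  have hpow2 : (0:ℝ) < 2^b := by positivity
  have hpown : (0:ℝ) < 2^n := by positivity
  have hABC : (4:ℝ)^s ≤ S * 2^b * (2*π*((s:ℝ)+1)) := by
    calc (4:ℝ)^s ≤ (((a+b).choose t.toNat : ℝ))^2 * (2*π*((s:ℝ)+1)) := hch
      _ ≤ S * 2^b * (2*π*((s:ℝ)+1)) := by
          apply mul_le_mul_of_nonneg_right hCS' hpi.le
  have hpows : (2:ℝ)^n * 2^b = 4^s := by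
    rw [← pow_add, show (4:ℝ) = 2^2 from by norm_num, ← pow_mul]
    congr 1
    omega
  have hfin : (2:ℝ)^n ≤ S * (2*π*((s:ℝ)+1)) := by
    have h' : (2:ℝ)^n * 2^b ≤ (S * (2*π*((s:ℝ)+1))) * 2^b := by
      rw [hpows]
      calc (4:ℝ)^s ≤ S * 2^b * (2*π*((s:ℝ)+1)) := hABC
        _ = (S * (2*π*((s:ℝ)+1))) * 2^b := by ring
    exact le_of_mul_le_mul_right h' hpow2
  have hgoal : 1/(2*π*((s:ℝ)+1)) ≤ Cov n m := by
    have hCov : Cov n m = S / 2^n := by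
      simp only [Cov, hSdef, ha, hb, htdef]
      rw [div_eq_mul_inv, ← inv_pow, mul_comm ((2:ℝ)⁻¹ ^ n)]
    rw [hCov, div_le_div_iff₀ hpi hpown]
    linarith
  calc 1/(2*π*((s:ℝ))+2*π) = 1/(2*π*((s:ℝ)+1)) := by ring_nf
    _ ≤ Cov n m := hgoal


lemma ibinom_zero (c : ℤ) : ibinom 0 c = if c = 0 then 1 else 0 := by
  unfold ibinom
  split_ifs with h1 h2 h2
  · rw [h2]
    rfl
  · have h3 : 0 < c.toNat := by omega
    exact Nat.choose_eq_zero_of_lt h3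
  · omega
  · rfl

lemma cov_half (m : ℕ) (hm : 1 ≤ m) :
    Cov (2*m) m = ((m-1).choose (m/2) : ℝ)^2 * ((2:ℝ)⁻¹)^(2*m) := by
  rw [Cov]
  have hb : 2*m - 2*m = 0 := Nat.sub_self _
  have ht : (((2*m : ℕ):ℤ) - (m:ℤ))/2 = ((m/2 : ℕ) : ℤ) := by
    push_cast
    omega
  rw [hb]
  have hsum : ∑ j ∈ Finset.range m,
      ((m - 1).choose j : ℝ)^2 * (ibinom 0 ((((2*m : ℕ):ℤ) - m)/2 - j) : ℝ)
      = ((m-1).choose (m/2) : ℝ)^2 := by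
    rw [Finset.sum_eq_single (m/2)]
    · have : ((((2*m : ℕ):ℤ) - m)/2 - (m/2 : ℕ) : ℤ) = 0 := by
        rw [ht]
        ring
      rw [this, ibinom_zero]
      norm_num
    · intro j hj hne
      have : ((((2*m : ℕ):ℤ) - m)/2 - j : ℤ) ≠ 0 := by
        rw [ht]
        intro hc
        apply hne
        omega
      rw [ibinom_zero, if_neg this]
      norm_num
    · intro h
      exact absurd (Finset.mem_range.2 (by omega)) h
  rw [hsum]
  ring

lemma mse_half_upper (m : ℕ) (hm : 4 ≤ m) :
    MSE (2*m) m ≤ (1 + 2/π + 8/((2*m:ℕ):ℝ)) / (4*((2*m:ℕ):ℝ)) := by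
  have hπ := pi_pos
  have hm4 : (4:ℝ) ≤ (m:ℝ) := by exact_mod_cast hm
  have hm0 : (0:ℝ) < (m:ℝ) := by linarith
  have hm1 : (0:ℝ) < (m:ℝ) - 1 := by linarith
  have hcov : Cov (2*m) m ≤ 1/(2*π*((m:ℝ)-1)) := by
    rw [cov_half m (by omega)]
    have hcu := choose_sq_upper m (by omega)
    have hp4 : ((2:ℝ)⁻¹)^(2*m) = ((4:ℝ)^m)⁻¹ := by
      rw [inv_pow]
      congr 1
      rw [show (4:ℝ) = 2^2 from by norm_num, ← pow_mul]
    rw [hp4, ← div_eq_mul_inv, div_le_div_iff₀ (by positivity) (by positivity)]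
    calc ((m-1).choose (m/2) : ℝ)^2 * (2*π*((m:ℝ)-1)) ≤ 4^m := hcu
      _ = 1 * 4^m := by ring
  rw [MSE]
  push_cast
  have hhalf : 1 - (m:ℝ)/(2*(m:ℝ)) = 1/2 := by
    field_simp
    ring
  rw [hhalf]
  have hexp : (1 + 2/π + 8/(2*(m:ℝ))) / (4*(2*(m:ℝ)))
      = 1/(8*(m:ℝ)) + 1/(4*π*(m:ℝ)) + 1/(2*(m:ℝ)^2) := by
    field_simp
    ring
  rw [hexp]
  have hq : 0 ≤ 2*π*(m:ℝ) - 2*π - (m:ℝ) := by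
    nlinarith [mul_nonneg (by linarith [pi_gt_three] : (0:ℝ) ≤ π - 3) (by linarith : (0:ℝ) ≤ (m:ℝ) - 1)]
  have key : 1/(4*π*((m:ℝ)-1)) ≤ 1/(4*π*(m:ℝ)) + 1/(2*(m:ℝ)^2) := by
    rw [div_add_div _ _ (by positivity) (by positivity),
      div_le_div_iff₀ (by positivity) (by positivity)]
    nlinarith [mul_nonneg (mul_nonneg (mul_nonneg pi_pos.le hm0.le) hm0.le) hq,
      mul_nonneg (mul_nonneg pi_pos.le hm0.le) hq, mul_pos pi_pos hm0]
  have step : (1:ℝ)/2 * Cov (2*m) m ≤ 1/(4*π*((m:ℝ)-1)) := by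
    calc (1:ℝ)/2 * Cov (2*m) m ≤ (1:ℝ)/2 * (1/(2*π*((m:ℝ)-1))) := by linarith [hcov]
      _ = 1/(4*π*((m:ℝ)-1)) := by
          rw [div_mul_div_comm, one_mul]
          ring_nf
  have heq8 : 1/(4*(2*(m:ℝ))) = 1/(8*(m:ℝ)) := by ring_nf
  linarith [key, step]

lemma mse_lower (n m : ℕ) (hm : 1 ≤ m) (h2 : 2*m ≤ n) :
    (1 + 2/π - 4/(n:ℝ)) / (4*(n:ℝ)) ≤ MSE n m := by
  have hπ := pi_pos
  have hn0 : (0:ℝ) < (n:ℝ) := by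
    have : 0 < n := by omega
    exact_mod_cast this
  set y : ℝ := ((n-m:ℕ):ℝ) with hy
  have hy0 : (0:ℝ) ≤ y := Nat.cast_nonneg _
  have hyn : (n:ℝ) ≤ 2*y := by
    have h' : n ≤ 2*(n-m) := by omega
    calc (n:ℝ) ≤ ((2*(n-m):ℕ):ℝ) := by exact_mod_cast h'
      _ = 2*y := by push_cast [hy]; ring
  have hym : (m:ℝ) = (n:ℝ) - y := by
    rw [hy, Nat.cast_sub (show m ≤ n by omega)]
    ring
  have hcov := cov_lower n m hm h2
  rw [MSE]
  have hfrac : 1 - (m:ℝ)/(n:ℝ) = y/(n:ℝ) := by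
    rw [hym]
    field_simp
    ring
  rw [hfrac]
  have step : y/(n:ℝ) * (1/(2*π*y+2*π)) ≤ y/(n:ℝ) * Cov n m :=
    mul_le_mul_of_nonneg_left hcov (by positivity)
  have hA : y/(n:ℝ) * (1/(2*π*y+2*π)) = 1/(2*π*(n:ℝ)) - 1/(2*π*(n:ℝ)*(y+1)) := by
    have hy1 : (0:ℝ) < y + 1 := by linarith
    have h2π : 2*π*y + 2*π = 2*π*(y+1) := by ring
    rw [h2π, div_sub_div _ _ (by positivity : (2*π*(n:ℝ)) ≠ 0) (by positivity : (2*π*(n:ℝ)*(y+1)) ≠ 0),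
      div_mul_div_comm, mul_one, div_eq_div_iff (by positivity) (by positivity)]
    ring
  have hB : (1 + 2/π - 4/(n:ℝ))/(4*(n:ℝ)) = 1/(4*(n:ℝ)) + 1/(2*π*(n:ℝ)) - 1/((n:ℝ)^2) := by
    field_simp
    ring
  have hsq : (n:ℝ)^2 ≤ 2*π*(n:ℝ)*(y+1) := by
    nlinarith [mul_nonneg (mul_nonneg hn0.le hy0) (by linarith [pi_gt_three] : (0:ℝ) ≤ π - 1),
      mul_nonneg hn0.le (by linarith [pi_gt_three] : (0:ℝ) ≤ π - 1),
      mul_le_mul_of_nonneg_left hyn hn0.le]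
  have hC : 1/(2*π*(n:ℝ)*(y+1)) ≤ 1/((n:ℝ)^2) :=
    one_div_le_one_div_of_le (by positivity) hsq
  rw [hB]
  rw [hA] at step
  linarith [step]

end CVaux

/-- **Constant-factor gap between cross-validation and an independent hold-out set.**
For sufficiently large even `n`, the ratio of the best k-fold cross-validation MSE
for Majority under uniformly random labels to the MSE `1/(4n)` of an independent
validation set of size `n` equals `1 + 2/π + O(1/n)`:
`|4n · min_{m ∣ n, 1 ≤ m, 2m ≤ n} MSE(n, m) - (1 + 2/π)| ≤ C/n`. -/
theorem mse_constant_factor_gap :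
    ∃ C : ℝ, 0 < C ∧ ∃ N : ℕ, ∀ n : ℕ, N ≤ n → Even n →
      |4 * (n : ℝ) *
          sInf {x : ℝ | ∃ m : ℕ, m ∣ n ∧ 1 ≤ m ∧ 2 * m ≤ n ∧ x = MSE n m}
        - (1 + 2 / π)| ≤ C / n := by
  refine ⟨8, by norm_num, 8, ?_⟩
  intro n hN hneven
  obtain ⟨p, hp⟩ := hneven
  have hπ := Real.pi_pos
  have hn0 : (0:ℝ) < (n:ℝ) := by
    have : 0 < n := by omega
    exact_mod_cast this
  set Sset := {x : ℝ | ∃ m : ℕ, m ∣ n ∧ 1 ≤ m ∧ 2 * m ≤ n ∧ x = MSE n m} with hSset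
  have hmem : MSE n (n/2) ∈ Sset := ⟨n/2, ⟨2, by omega⟩, by omega, by omega, rfl⟩
  have hlb : ∀ x ∈ Sset, (1 + 2/π - 4/(n:ℝ))/(4*(n:ℝ)) ≤ x := by
    rintro x ⟨m, hdvd, hm1, hm2, rfl⟩
    exact CVaux.mse_lower n m hm1 hm2
  have hbdd : BddBelow Sset := ⟨_, hlb⟩
  have hne : Sset.Nonempty := ⟨_, hmem⟩
  have hInf_le : sInf Sset ≤ MSE n (n/2) := csInf_le hbdd hmem
  have hle_Inf : (1 + 2/π - 4/(n:ℝ))/(4*(n:ℝ)) ≤ sInf Sset := le_csInf hne hlb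
  have hup : MSE n (n/2) ≤ (1 + 2/π + 8/(n:ℝ))/(4*(n:ℝ)) := by
    have h1 : n = 2*(n/2) := by omega
    have h := CVaux.mse_half_upper (n/2) (by omega)
    rw [← h1] at h
    exact h
  rw [abs_le]
  have hn4 : (0:ℝ) ≤ 4*(n:ℝ) := by positivity
  constructor
  · have h := mul_le_mul_of_nonneg_left hle_Inf hn4
    have heq : 4*(n:ℝ) * ((1 + 2/π - 4/(n:ℝ))/(4*(n:ℝ))) = 1 + 2/π - 4/(n:ℝ) := by
      field_simp
    rw [heq] at h
    have h4 : 4/(n:ℝ) ≤ 8/(n:ℝ) := by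
      gcongr
      norm_num
    linarith
  · have h := mul_le_mul_of_nonneg_left (hInf_le.trans hup) hn4
    have heq : 4*(n:ℝ) * ((1 + 2/π + 8/(n:ℝ))/(4*(n:ℝ))) = 1 + 2/π + 8/(n:ℝ) := by
      field_simp
    rw [heq] at h
    linarith
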